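/- Fix η₀ > 0 and let a : ℕ → ℝ be any sequence satisfying the homogeneous tridiagonal system σ_{0,0} a_0 + τ_{0,0} a_1 = 0, ρ_{1,0} a_0 + σ_{1,0} a_1 + τ_{1,0} a_2 = 0, and ρ_{n,0} a_{n−1} + σ_{n,0} a_n + τ_{n,0} a_{n+1} = 0 for all n ≥ 2. Then a_n = 2 (a_0 / q_{0,0}) · q_{n,0} for every n ≥ 1. (The homogeneous system, corresponding to vanishing Neumann data with indices (m,ν,μ) = (0,+,+), has exactly the one-parameter family of solutions corresponding to constant boundary functions.) -/

import Mathlib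

open Real MeasureTheory intervalIntegral Filter Topology

/-- Associated Legendre function of the second kind of half-integer degree,
`Q_{n-1/2}^m(t)`, defined via its real integral representation (valid for `t > 1`). -/
noncomputable def Qh (n m : ℕ) (t : ℝ) : ℝ :=
  ((-1 : ℝ) ^ m / (2 : ℝ) ^ ((n : ℝ) + 1 / 2)) *
    (Real.Gamma ((n : ℝ) + (m : ℝ) + 1 / 2) / Real.Gamma ((n : ℝ) + 1 / 2)) *
    (t ^ 2 - 1) ^ ((m : ℝ) / 2) *
    ∫ s in (-1 : ℝ)..1, (1 - s ^ 2) ^ ((n : ℝ) - 1 / 2) * (t - s) ^ (-((n : ℝ) + (m : ℝ) + 1 / 2))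

/-- `q_{n,m} = Q_{n-1/2}^m(cosh η₀)`. -/
noncomputable def qh (η₀ : ℝ) (n m : ℕ) : ℝ := Qh n m (Real.cosh η₀)

/-- `Φ_n^{+1}(θ) = cos (n θ)`, `Φ_n^{-1}(θ) = sin (n θ)`. -/
noncomputable def Phi (ν : ℤ) (n : ℤ) (θ : ℝ) : ℝ :=
  if ν = 1 then Real.cos ((n : ℝ) * θ) else Real.sin ((n : ℝ) * θ)

/-- A quadruple `(n, m, ν, μ)` is admissible. -/
def Admissible (n m : ℕ) (ν μ : ℤ) : Prop :=
  (ν = 1 ∨ ν = -1) ∧ (μ = 1 ∨ μ = -1) ∧ ¬(n = 0 ∧ ν = -1) ∧ ¬(m = 0 ∧ μ = -1)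

/-- Toroidal Neumann constant `ρ_{n,m}(η₀)` (`n ≥ 1`). -/
noncomputable def rhoT (η₀ : ℝ) (n m : ℕ) : ℝ :=
  if n = 1 then
    (1 / (2 * Real.sinh η₀)) *
      (Real.cosh η₀ + (2 * (m : ℝ) - 1) * qh η₀ 1 m / qh η₀ 0 m)
  else
    (1 / (4 * Real.sinh η₀)) *
      ((2 * (n : ℝ) - 1) * Real.cosh η₀ +
        (2 * ((m : ℝ) - (n : ℝ)) + 1) * qh η₀ n m / qh η₀ (n - 1) m)

/-- Toroidal Neumann constant `σ_{n,m}(η₀)`. -/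
noncomputable def sigmaT (η₀ : ℝ) (n m : ℕ) : ℝ :=
  (-1 / (2 * Real.sinh η₀)) *
    ((2 * (n : ℝ) * Real.cosh η₀ ^ 2 + 1) +
      (2 * ((m : ℝ) - (n : ℝ)) - 1) * Real.cosh η₀ * qh η₀ (n + 1) m / qh η₀ n m)

/-- Toroidal Neumann constant `τ_{n,m}(η₀)`. -/
noncomputable def tauT (η₀ : ℝ) (n m : ℕ) : ℝ :=
  (1 / (4 * Real.sinh η₀)) *
    ((2 * (n : ℝ) + 3) * Real.cosh η₀ +
      (2 * ((m : ℝ) - (n : ℝ)) - 3) * qh η₀ (n + 2) m / qh η₀ (n + 1) m)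

/-- The normal derivative `N_{n,m}^{ν,μ}(θ,φ)` of the interior toroidal harmonic
`I_{n,m}^{ν,μ}` on the torus `η = η₀`. -/
noncomputable def NDer (η₀ : ℝ) (n m : ℕ) (ν μ : ℤ) (θ φ : ℝ) : ℝ :=
  (Real.sqrt (Real.cosh η₀ - Real.cos θ) / (4 * Real.sinh η₀)) * Phi μ (m : ℤ) φ *
    (Phi ν ((n : ℤ) - 1) θ *
        ((1 + 2 * (n : ℝ)) * Real.cosh η₀ -
          (2 * ((n : ℝ) - (m : ℝ)) + 1) * qh η₀ (n + 1) m / qh η₀ n m) -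
      2 * Phi ν (n : ℤ) θ *
        ((2 * (n : ℝ) * Real.cosh η₀ ^ 2 + 1) -
          (2 * ((n : ℝ) - (m : ℝ)) + 1) * Real.cosh η₀ * qh η₀ (n + 1) m / qh η₀ n m) +
      Phi ν ((n : ℤ) + 1) θ *
        ((1 + 2 * (n : ℝ)) * Real.cosh η₀ -
          (2 * ((n : ℝ) - (m : ℝ)) + 1) * qh η₀ (n + 1) m / qh η₀ n m))

/-- Interior toroidal harmonic `I_{n,m}^{ν,μ}[η₀]` in toroidal coordinates. -/
noncomputable def Ih (η₀ : ℝ) (n m : ℕ) (ν μ : ℤ) (η θ φ : ℝ) : ℝ :=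
  Real.sqrt (Real.cosh η - Real.cos θ) *
    (Qh n m (Real.cosh η) / Qh n m (Real.cosh η₀)) * Phi ν (n : ℤ) θ * Phi μ (m : ℤ) φ


section ToroidalAux
open Set

noncomputable def Fint (t a b : ℝ) : ℝ :=
  ∫ s in (-1:ℝ)..1, (1 - s^2)^a * (t - s)^(-b)

lemma intInt_base {a : ℝ} (ha : -1 < a) :
    IntervalIntegrable (fun s => (1 - s^2)^a) volume (-1) 1 := by
  have h1 : IntervalIntegrable (fun s => (1 - s^2)^a) volume 0 1 := by
    have i1 : IntervalIntegrable (fun s : ℝ => (1 - s)^a) volume 0 1 := by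
      have := ((intervalIntegrable_rpow' (a := 0) (b := 1) ha).comp_sub_left 1).symm
      simpa using this
    have i2 : IntervalIntegrable (fun s : ℝ => (1 - s)^a * (1 + s)^a) volume 0 1 := by
      apply i1.mul_continuousOn
      apply ContinuousOn.rpow_const (by fun_prop)
      intro x hx
      rw [Set.uIcc_of_le (by norm_num : (0:ℝ) ≤ 1)] at hx
      left; nlinarith [hx.1]
    rw [intervalIntegrable_iff_integrableOn_Ioo_of_le (by norm_num)] at i2 ⊢
    apply i2.congr_fun ?_ measurableSet_Ioo
    intro x hx
    simp only
    rw [← Real.mul_rpow (by nlinarith [hx.2] : (0:ℝ) ≤ 1 - x) (by nlinarith [hx.1] : (0:ℝ) ≤ 1 + x)]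
    congr 1; ring
  have h2 : IntervalIntegrable (fun s => (1 - s^2)^a) volume (-1) 0 := by
    have h3 := (h1.comp_sub_left 0).symm
    simp only [zero_sub, neg_zero, neg_sq] at h3
    exact h3
  exact h2.trans h1

lemma intInt_aux {a : ℝ} (ha : -1 < a) {h : ℝ → ℝ}
    (hh : ContinuousOn h (Set.uIcc (-1:ℝ) 1)) :
    IntervalIntegrable (fun s => (1 - s^2)^a * h s) volume (-1) 1 :=
  (intInt_base ha).mul_continuousOn hh

lemma iint_congr {f g : ℝ → ℝ} (h : ∀ s ∈ Set.Ioo (-1:ℝ) 1, f s = g s) :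
    ∫ s in (-1:ℝ)..1, f s = ∫ s in (-1:ℝ)..1, g s := by
  rw [intervalIntegral.integral_of_le (by norm_num), intervalIntegral.integral_of_le (by norm_num),
    MeasureTheory.integral_Ioc_eq_integral_Ioo, MeasureTheory.integral_Ioc_eq_integral_Ioo]
  exact MeasureTheory.setIntegral_congr_fun measurableSet_Ioo h

lemma tsub_cont {t b : ℝ} (ht : 1 < t) :
    ContinuousOn (fun s : ℝ => (t - s)^(-b)) (Set.uIcc (-1:ℝ) 1) := by
  apply ContinuousOn.rpow_const (by fun_prop)
  intro x hx
  rw [Set.uIcc_of_le (by norm_num : (-1:ℝ) ≤ 1)] at hx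
  left; nlinarith [hx.2]

lemma Fint_intInt {t a : ℝ} (ht : 1 < t) (ha : -1 < a) (b : ℝ) :
    IntervalIntegrable (fun s => (1 - s^2)^a * (t - s)^(-b)) volume (-1) 1 :=
  intInt_aux ha (tsub_cont ht)

lemma Fint_pos {t a : ℝ} (ht : 1 < t) (ha : -1 < a) (b : ℝ) : 0 < Fint t a b := by
  apply intervalIntegral_pos_of_pos_on (Fint_intInt ht ha b) ?_ (by norm_num)
  intro x hx
  apply mul_pos (Real.rpow_pos_of_pos (by nlinarith [hx.1, hx.2]) _)
    (Real.rpow_pos_of_pos (by nlinarith [hx.2]) _)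

lemma R1 {t a : ℝ} (ht : 1 < t) (ha : -1 < a) (b : ℝ) :
    b * Fint t (a+1) (b+1) = 2*(a+1) * (t * Fint t a b - Fint t a (b-1)) := by
  set g : ℝ → ℝ := fun s => (1 - s^2)^(a+1) * (t - s)^(-b) with hg
  set g' : ℝ → ℝ := fun s =>
      (-2*(a+1)*t) * ((1 - s^2)^a * (t - s)^(-b))
      + (2*(a+1)) * ((1 - s^2)^a * (t - s)^(-(b-1)))
      + b * ((1 - s^2)^(a+1) * (t - s)^(-(b+1))) with hg'
  have ha1 : (0:ℝ) < a + 1 := by linarith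
  have hderiv : ∀ s ∈ Set.Ioo (-1:ℝ) 1, HasDerivAt g (g' s) s := by
    intro s hs
    have hts : (0:ℝ) < t - s := by nlinarith [hs.2]
    have h1s : (0:ℝ) < 1 - s^2 := by nlinarith [hs.1, hs.2]
    have d1 : HasDerivAt (fun s : ℝ => (1 - s^2)^(a+1)) ((-(2*s))*(a+1)*(1-s^2)^a) s := by
      have dd : HasDerivAt (fun s : ℝ => 1 - s^2) (-(2*s)) s := by
        simpa using ((hasDerivAt_pow 2 s).const_sub 1)
      have := dd.rpow_const (p := a+1) (Or.inl h1s.ne')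
      simpa [add_sub_cancel_right] using this
    have d2 : HasDerivAt (fun s : ℝ => (t - s)^(-b)) ((-1)*(-b)*(t-s)^(-b-1)) s := by
      have dd : HasDerivAt (fun s : ℝ => t - s) (-1) s := by
        simpa using ((hasDerivAt_id s).const_sub t)
      exact dd.rpow_const (p := -b) (Or.inl hts.ne')
    have : HasDerivAt (fun s : ℝ => (1 - s^2)^(a+1) * (t - s)^(-b))
        ((-(2*s))*(a+1)*(1-s^2)^a * (t - s)^(-b) + (1 - s^2)^(a+1) * ((-1)*(-b)*(t-s)^(-b-1))) s :=
      d1.mul d2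
    convert this using 1
    have e1 : (t - s)^(-(b-1)) = (t-s) * (t-s)^(-b) := by
      rw [show -(b-1) = 1 + -b by ring, Real.rpow_add hts, Real.rpow_one]
    have e2 : (t - s)^(-(b+1)) = (t-s)^(-b-1) := by ring_nf
    have e3 : (1 - s^2)^(a+1) = (1 - s^2) * (1-s^2)^a := by
      rw [show a+1 = 1 + a by ring, Real.rpow_add h1s, Real.rpow_one]
    simp only [hg']
    rw [e1, e2, e3]
    ring
  have hcont : ContinuousOn g (Set.Icc (-1:ℝ) 1) := by
    rw [hg]
    apply ContinuousOn.mul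
    · apply ContinuousOn.rpow_const (by fun_prop)
      intro x _; right; linarith
    · have := tsub_cont (b := b) ht
      rwa [Set.uIcc_of_le (by norm_num : (-1:ℝ) ≤ 1)] at this
  have hint : IntervalIntegrable g' volume (-1) 1 := by
    apply IntervalIntegrable.add
    apply IntervalIntegrable.add
    · exact (Fint_intInt ht ha b).const_mul _
    · exact (Fint_intInt ht ha (b-1)).const_mul _
    · exact (Fint_intInt ht (by linarith) (b+1)).const_mul _
  have hibp := intervalIntegral.integral_eq_sub_of_hasDerivAt_of_le (by norm_num)
    hcont hderiv hint
  have hzero : g 1 - g (-1) = 0 := by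
    simp only [hg]
    norm_num
    rw [Real.zero_rpow (by linarith : a + 1 ≠ 0)]
    norm_num
  rw [hzero] at hibp
  have hsplit : ∫ s in (-1:ℝ)..1, g' s =
      (-2*(a+1)*t) * Fint t a b + (2*(a+1)) * Fint t a (b-1) + b * Fint t (a+1) (b+1) := by
    simp only [hg']
    rw [intervalIntegral.integral_add (((Fint_intInt ht ha b).const_mul _).add
        ((Fint_intInt ht ha (b-1)).const_mul _)) ((Fint_intInt ht (by linarith) (b+1)).const_mul _),
      intervalIntegral.integral_add ((Fint_intInt ht ha b).const_mul _)
        ((Fint_intInt ht ha (b-1)).const_mul _),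
      intervalIntegral.integral_const_mul, intervalIntegral.integral_const_mul,
      intervalIntegral.integral_const_mul]
    rfl
  rw [hsplit] at hibp
  linarith [hibp]

lemma R2 {t a : ℝ} (ht : 1 < t) (ha : -1 < a) (b : ℝ) :
    Fint t (a+1) b = -(t^2-1) * Fint t a b + 2*t*Fint t a (b-1) - Fint t a (b-2) := by
  have key : Fint t (a+1) b =
      ∫ s in (-1:ℝ)..1, ((-(t^2-1)) * ((1 - s^2)^a * (t - s)^(-b))
        + (2*t) * ((1 - s^2)^a * (t - s)^(-(b-1)))
        + (-1) * ((1 - s^2)^a * (t - s)^(-(b-2)))) := by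
    apply iint_congr
    intro s hs
    have hts : (0:ℝ) < t - s := by nlinarith [hs.2]
    have h1s : (0:ℝ) < 1 - s^2 := by nlinarith [hs.1, hs.2]
    have e3 : (1 - s^2)^(a+1) = (1 - s^2) * (1-s^2)^a := by
      rw [show a+1 = 1 + a by ring, Real.rpow_add h1s, Real.rpow_one]
    have e1 : (t - s)^(-(b-1)) = (t-s) * (t-s)^(-b) := by
      rw [show -(b-1) = 1 + -b by ring, Real.rpow_add hts, Real.rpow_one]
    have e2 : (t - s)^(-(b-2)) = (t-s)^2 * (t-s)^(-b) := by
      rw [show -(b-2) = 2 + -b by ring, Real.rpow_add hts]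
      norm_num [Real.rpow_two]
    rw [e3, e1, e2]
    ring
  rw [key]
  rw [intervalIntegral.integral_add (((Fint_intInt ht ha b).const_mul _).add
      ((Fint_intInt ht ha (b-1)).const_mul _)) ((Fint_intInt ht ha (b-2)).const_mul _),
    intervalIntegral.integral_add ((Fint_intInt ht ha b).const_mul _)
      ((Fint_intInt ht ha (b-1)).const_mul _),
    intervalIntegral.integral_const_mul, intervalIntegral.integral_const_mul,
    intervalIntegral.integral_const_mul]
  show (-(t^2-1)) * Fint t a b + (2*t) * Fint t a (b-1) + (-1) * Fint t a (b-2) = _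
  ring

/-- `u_x := F(x-1/2, x-1/2) = t·J_x - J_{x+1}/2`. -/
lemma ulem {t x : ℝ} (ht : 1 < t) (hx : 0 ≤ x) :
    Fint t (x-1/2) (x-1/2)
      = t * Fint t (x-1/2) (x+1/2) - Fint t (x+1/2) (x+3/2) / 2 := by
  have ha : (-1:ℝ) < x - 1/2 := by linarith
  have hL := R1 ht ha (x+1/2)
  rw [show x-1/2+1 = x+1/2 by ring, show x+1/2+1 = x+3/2 by ring,
    show x+1/2-1 = x-1/2 by ring] at hL
  have hne : x + 1/2 ≠ 0 := by linarith
  have h2 : (x+1/2) * (t * Fint t (x-1/2) (x+1/2) - Fint t (x+1/2) (x+3/2) / 2)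
      = (x+1/2) * Fint t (x-1/2) (x-1/2) := by linear_combination -(1/2) * hL
  have := mul_left_cancel₀ hne h2
  linarith

/-- `(t²-1)·H_x = t·J_x - J_{x+1}/2` where `H_x = F(x-1/2, x+3/2)`. -/
lemma Hlem {t x : ℝ} (ht : 1 < t) (hx : 0 ≤ x) :
    (t^2-1) * Fint t (x-1/2) (x+3/2)
      = t * Fint t (x-1/2) (x+1/2) - Fint t (x+1/2) (x+3/2) / 2 := by
  have ha : (-1:ℝ) < x - 1/2 := by linarith
  have hC := R2 ht ha (x+3/2)
  rw [show x-1/2+1 = x+1/2 by ring, show x+3/2-1 = x+1/2 by ring,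
    show x+3/2-2 = x-1/2 by ring] at hC
  have hu := ulem ht hx
  linear_combination hC - hu

/-- Three-term recurrence for `J_x = F(x-1/2, x+1/2)`. -/
lemma Jrec {t x : ℝ} (ht : 1 < t) (hx : 1 ≤ x) :
    (2*x+1) * Fint t (x+1/2) (x+3/2)
      = 8*x*t*Fint t (x-1/2) (x+1/2) - 4*(2*x-1)*Fint t (x-3/2) (x-1/2) := by
  have hH := Hlem ht (by linarith : (0:ℝ) ≤ x)
  have hG := Hlem (x := x-1) ht (by linarith)
  rw [show x-1-1/2 = x-3/2 by ring, show x-1+3/2 = x+1/2 by ring,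
    show x-1+1/2 = x-1/2 by ring] at hG
  have hD := R1 ht (by linarith : (-1:ℝ) < x - 3/2) (x+1/2)
  rw [show x-3/2+1 = x-1/2 by ring, show x+1/2+1 = x+3/2 by ring,
    show x+1/2-1 = x-1/2 by ring] at hD
  -- hD : (x+1/2) * F(x-1/2,x+3/2) = 2*(x-1/2)*(t*F(x-3/2,x+1/2) - F(x-3/2,x-1/2))
  linear_combination -4*(t^2-1)*hD + 2*(2*x+1)*hH - 2*(4*x-2)*t*hG

lemma two_rpow_shift (x : ℝ) : (2:ℝ)^(x+1) = 2 * (2:ℝ)^x := by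
  rw [Real.rpow_add (by norm_num : (0:ℝ) < 2), Real.rpow_one]; ring

lemma qh_eq (η₀ : ℝ) (n : ℕ) :
    qh η₀ n 0 = (2:ℝ)^(-((n:ℝ)+1/2)) * Fint (Real.cosh η₀) ((n:ℝ)-1/2) ((n:ℝ)+1/2) := by
  unfold qh Qh Fint
  have hΓ : Real.Gamma ((n:ℝ) + 1/2) ≠ 0 := (Real.Gamma_pos_of_pos (by positivity)).ne'
  rw [Real.rpow_neg (by norm_num : (0:ℝ) ≤ 2)]
  simp only [Nat.cast_zero, Nat.cast_ofNat, pow_zero, add_zero, zero_div, Real.rpow_zero,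
    one_mul, mul_one, div_self hΓ, one_div]
  rw [div_self (Real.Gamma_pos_of_pos (by positivity : (0:ℝ) < (n:ℝ)+2⁻¹)).ne', mul_one]

lemma Fint_eq_q (η₀ : ℝ) (n : ℕ) :
    Fint (Real.cosh η₀) ((n:ℝ)-1/2) ((n:ℝ)+1/2) = (2:ℝ)^((n:ℝ)+1/2) * qh η₀ n 0 := by
  rw [qh_eq, ← mul_assoc, ← Real.rpow_add (by norm_num : (0:ℝ) < 2),
    show ((n:ℝ)+1/2) + -((n:ℝ)+1/2) = 0 by ring, Real.rpow_zero, one_mul]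

section eta
variable {η₀ : ℝ} (hη₀ : 0 < η₀)
include hη₀

lemma hcosh : 1 < Real.cosh η₀ := Real.one_lt_cosh.2 hη₀.ne'

lemma qh_pos (n : ℕ) : 0 < qh η₀ n 0 := by
  rw [qh_eq]
  exact mul_pos (Real.rpow_pos_of_pos (by norm_num) _)
    (Fint_pos (hcosh hη₀) (by push_cast; nlinarith [Nat.cast_nonneg (α := ℝ) n]) _)

lemma qh_gap (n : ℕ) : qh η₀ (n+1) 0 < Real.cosh η₀ * qh η₀ n 0 := by
  set t := Real.cosh η₀ with hts
  have ht := hcosh hη₀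
  have hH := Hlem (x := (n:ℝ)) ht (Nat.cast_nonneg n)
  have hHpos : 0 < (t^2-1) * Fint t ((n:ℝ)-1/2) ((n:ℝ)+3/2) :=
    mul_pos (by nlinarith) (Fint_pos ht (by nlinarith [Nat.cast_nonneg (α := ℝ) n]) _)
  rw [hH] at hHpos
  have e1 : Fint t ((n:ℝ)-1/2) ((n:ℝ)+1/2) = (2:ℝ)^((n:ℝ)+1/2) * qh η₀ n 0 := Fint_eq_q η₀ n
  have e2 : Fint t ((n:ℝ)+1/2) ((n:ℝ)+3/2) = (2:ℝ)^((n:ℝ)+1/2) * (2 * qh η₀ (n+1) 0) := by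
    have := Fint_eq_q η₀ (n+1)
    push_cast at this
    rw [show ((n:ℝ)+1-1/2) = (n:ℝ)+1/2 by ring, show ((n:ℝ)+1+1/2) = (n:ℝ)+3/2 by ring] at this
    rw [this, show ((n:ℝ)+3/2) = ((n:ℝ)+1/2)+1 by ring, two_rpow_shift]
    ring
  rw [e1, e2] at hHpos
  have hP : (0:ℝ) < (2:ℝ)^((n:ℝ)+1/2) := Real.rpow_pos_of_pos (by norm_num) _
  nlinarith [hHpos, hP]

lemma qh_rec (n : ℕ) :
    (2*(n:ℝ)+3) * qh η₀ (n+2) 0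
      = (4*(n:ℝ)+4) * Real.cosh η₀ * qh η₀ (n+1) 0 - (2*(n:ℝ)+1) * qh η₀ n 0 := by
  set t := Real.cosh η₀ with hts
  have ht := hcosh hη₀
  have hJ := Jrec (x := (n:ℝ)+1) ht (by nlinarith [Nat.cast_nonneg (α := ℝ) n])
  rw [show ((n:ℝ)+1+1/2) = (n:ℝ)+3/2 by ring, show ((n:ℝ)+1+3/2) = (n:ℝ)+5/2 by ring,
    show ((n:ℝ)+1-1/2) = (n:ℝ)+1/2 by ring, show ((n:ℝ)+1-3/2) = (n:ℝ)-1/2 by ring] at hJ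
  have e0 : Fint t ((n:ℝ)-1/2) ((n:ℝ)+1/2) = (2:ℝ)^((n:ℝ)+1/2) * qh η₀ n 0 := Fint_eq_q η₀ n
  have e1 : Fint t ((n:ℝ)+1/2) ((n:ℝ)+3/2) = (2:ℝ)^((n:ℝ)+1/2) * (2 * qh η₀ (n+1) 0) := by
    have := Fint_eq_q η₀ (n+1)
    push_cast at this
    rw [show ((n:ℝ)+1-1/2) = (n:ℝ)+1/2 by ring, show ((n:ℝ)+1+1/2) = (n:ℝ)+3/2 by ring] at this
    rw [this, show ((n:ℝ)+3/2) = ((n:ℝ)+1/2)+1 by ring, two_rpow_shift]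
    ring
  have e2 : Fint t ((n:ℝ)+3/2) ((n:ℝ)+5/2) = (2:ℝ)^((n:ℝ)+1/2) * (4 * qh η₀ (n+2) 0) := by
    have := Fint_eq_q η₀ (n+2)
    push_cast at this
    rw [show ((n:ℝ)+2-1/2) = (n:ℝ)+3/2 by ring, show ((n:ℝ)+2+1/2) = (n:ℝ)+5/2 by ring] at this
    rw [this, show ((n:ℝ)+5/2) = (((n:ℝ)+1/2)+1)+1 by ring, two_rpow_shift, two_rpow_shift]
    ring
  rw [e0, e1, e2] at hJ
  have hP : ((2:ℝ)^((n:ℝ)+1/2)) ≠ 0 := (Real.rpow_pos_of_pos (by norm_num) _).ne'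
  have h2 : ((2:ℝ)^((n:ℝ)+1/2)) * ((2*(n:ℝ)+3) * qh η₀ (n+2) 0)
      = ((2:ℝ)^((n:ℝ)+1/2)) * ((4*(n:ℝ)+4) * t * qh η₀ (n+1) 0 - (2*(n:ℝ)+1) * qh η₀ n 0) := by
    linear_combination (1/4) * hJ
  exact mul_left_cancel₀ hP h2


lemma tauT_pos (n : ℕ) : 0 < tauT η₀ n 0 := by
  have hs : 0 < Real.sinh η₀ := Real.sinh_pos_iff.2 hη₀
  have hq1 := qh_pos hη₀ (n+1)
  have hgap := qh_gap hη₀ (n+1)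
  rw [tauT]
  have key : 0 < (2 * (n:ℝ) + 3) * Real.cosh η₀ +
      (2 * ((0:ℝ) - (n:ℝ)) - 3) * qh η₀ (n + 2) 0 / qh η₀ (n + 1) 0 := by
    rw [show (2 * ((0:ℝ) - (n:ℝ)) - 3) = -(2*(n:ℝ)+3) by ring]
    have h2 : qh η₀ (n+2) 0 / qh η₀ (n+1) 0 < Real.cosh η₀ :=
      (div_lt_iff₀ hq1).2 (by linarith [hgap])
    have h3 : (0:ℝ) < 2*(n:ℝ)+3 := by positivity
    have h4 := mul_lt_mul_of_pos_left h2 h3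
    have h5 : (2 * (n:ℝ) + 3) * Real.cosh η₀ +
        -(2*(n:ℝ)+3) * qh η₀ (n + 2) 0 / qh η₀ (n + 1) 0
        = (2 * (n:ℝ) + 3) * Real.cosh η₀ -
          (2*(n:ℝ)+3) * (qh η₀ (n + 2) 0 / qh η₀ (n + 1) 0) := by ring
    rw [h5]
    linarith
  simp only [Nat.cast_zero] at key ⊢
  positivity

lemma htau_mul (n : ℕ) : tauT η₀ n 0 * qh η₀ (n+1) 0
    = (2*(n:ℝ)+3)/(4*Real.sinh η₀) * (Real.cosh η₀ * qh η₀ (n+1) 0 - qh η₀ (n+2) 0) := by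
  have hs : Real.sinh η₀ ≠ 0 := (Real.sinh_pos_iff.2 hη₀).ne'
  have hq1 := (qh_pos hη₀ (n+1)).ne'
  rw [tauT]; push_cast; field_simp; ring

lemma hsigma_mul (n : ℕ) : sigmaT η₀ n 0 * qh η₀ n 0
    = (-1/(2*Real.sinh η₀)) * ((2*(n:ℝ)*Real.cosh η₀^2+1) * qh η₀ n 0
        - (2*(n:ℝ)+1) * Real.cosh η₀ * qh η₀ (n+1) 0) := by
  have hs : Real.sinh η₀ ≠ 0 := (Real.sinh_pos_iff.2 hη₀).ne'
  have hq0 := (qh_pos hη₀ n).ne'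
  rw [sigmaT]; push_cast; field_simp; ring

lemma hrho_mul (k : ℕ) : rhoT η₀ (k+2) 0 * qh η₀ (k+1) 0
    = (2*(k:ℝ)+3)/(4*Real.sinh η₀) * (Real.cosh η₀ * qh η₀ (k+1) 0 - qh η₀ (k+2) 0) := by
  have hs : Real.sinh η₀ ≠ 0 := (Real.sinh_pos_iff.2 hη₀).ne'
  have hq1 := (qh_pos hη₀ (k+1)).ne'
  rw [rhoT, if_neg (by omega)]
  have e1 : (k+2-1 : ℕ) = k+1 := rfl
  rw [e1]; push_cast; field_simp; ring

lemma hrho1_mul : rhoT η₀ 1 0 * (qh η₀ 0 0 / 2)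
    = 1/(4*Real.sinh η₀) * (Real.cosh η₀ * qh η₀ 0 0 - qh η₀ 1 0) := by
  have hs : Real.sinh η₀ ≠ 0 := (Real.sinh_pos_iff.2 hη₀).ne'
  have hq0 := (qh_pos hη₀ 0).ne'
  rw [rhoT, if_pos rfl]; push_cast; field_simp; ring

lemma row0 : sigmaT η₀ 0 0 * (qh η₀ 0 0 / 2) + tauT η₀ 0 0 * qh η₀ 1 0 = 0 := by
  have h0 := qh_rec hη₀ 0
  norm_num at h0
  have hσ := hsigma_mul hη₀ 0
  norm_num at hσ
  have : sigmaT η₀ 0 0 * (qh η₀ 0 0 / 2)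
      = (-1/(4*Real.sinh η₀)) * (qh η₀ 0 0 - Real.cosh η₀ * qh η₀ 1 0) := by
    have hs : Real.sinh η₀ ≠ 0 := (Real.sinh_pos_iff.2 hη₀).ne'
    have hq0 := (qh_pos hη₀ 0).ne'
    rw [sigmaT]; push_cast; field_simp; ring
  rw [this, htau_mul hη₀ 0]
  push_cast
  linear_combination (-(1/(4*Real.sinh η₀))) * h0

lemma row1 : rhoT η₀ 1 0 * (qh η₀ 0 0 / 2) + sigmaT η₀ 1 0 * qh η₀ 1 0
    + tauT η₀ 1 0 * qh η₀ 2 0 = 0 := by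
  have h0 := qh_rec hη₀ 0
  have h1 := qh_rec hη₀ 1
  norm_num at h0 h1
  rw [hrho1_mul hη₀, hsigma_mul hη₀ 1, htau_mul hη₀ 1]
  push_cast
  linear_combination (Real.cosh η₀/(4*Real.sinh η₀)) * h0 - (1/(4*Real.sinh η₀)) * h1

lemma rown (k : ℕ) : rhoT η₀ (k+2) 0 * qh η₀ (k+1) 0 + sigmaT η₀ (k+2) 0 * qh η₀ (k+2) 0
    + tauT η₀ (k+2) 0 * qh η₀ (k+3) 0 = 0 := by
  have h0 := qh_rec hη₀ (k+1)
  have h1 := qh_rec hη₀ (k+2)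
  push_cast at h0 h1
  have e1 : (k+1+2 : ℕ) = k+3 := rfl
  have e2 : (k+1+1 : ℕ) = k+2 := rfl
  have e3 : (k+2+2 : ℕ) = k+4 := rfl
  have e4 : (k+2+1 : ℕ) = k+3 := rfl
  rw [e1, e2] at h0
  rw [e3, e4] at h1
  have hτ := htau_mul hη₀ (k+2)
  rw [e3, e4] at hτ
  have hσ := hsigma_mul hη₀ (k+2)
  rw [e4] at hσ
  rw [hrho_mul hη₀ k, hσ, hτ]
  push_cast
  linear_combination (Real.cosh η₀/(4*Real.sinh η₀)) * h0 - (1/(4*Real.sinh η₀)) * h1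
end eta

end ToroidalAux

/-- the homogeneous tridiagonal system at `(m,ν,μ) = (0,+,+)` has only
the solutions corresponding to constant boundary functions. -/
theorem homogeneous_system_solution (η₀ : ℝ) (hη₀ : 0 < η₀) (a : ℕ → ℝ)
    (h0 : sigmaT η₀ 0 0 * a 0 + tauT η₀ 0 0 * a 1 = 0)
    (h1 : rhoT η₀ 1 0 * a 0 + sigmaT η₀ 1 0 * a 1 + tauT η₀ 1 0 * a 2 = 0)
    (hn : ∀ n : ℕ, 2 ≤ n →
      rhoT η₀ n 0 * a (n - 1) + sigmaT η₀ n 0 * a n + tauT η₀ n 0 * a (n + 1) = 0) :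
    ∀ n : ℕ, 1 ≤ n → a n = 2 * (a 0 / qh η₀ 0 0) * qh η₀ n 0 := by
  set c : ℝ := 2 * (a 0 / qh η₀ 0 0) with hc
  have hq0 := qh_pos hη₀ 0
  have hca : c * qh η₀ 0 0 = 2 * a 0 := by
    rw [hc]; field_simp
  have key : ∀ n : ℕ, a (n+1) = c * qh η₀ (n+1) 0 ∧ a (n+2) = c * qh η₀ (n+2) 0 := by
    intro n
    induction n with
    | zero =>
      have hr := row0 hη₀
      have hr' : sigmaT η₀ 0 0 * a 0 + tauT η₀ 0 0 * (c * qh η₀ 1 0) = 0 := by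
        linear_combination c * hr - (sigmaT η₀ 0 0 / 2) * hca
      have ha1 : a 1 = c * qh η₀ 1 0 := by
        apply mul_left_cancel₀ (tauT_pos hη₀ 0).ne'
        linear_combination h0 - hr'
      refine ⟨ha1, ?_⟩
      have hr1 := row1 hη₀
      have hr1' : rhoT η₀ 1 0 * a 0 + sigmaT η₀ 1 0 * (c * qh η₀ 1 0)
          + tauT η₀ 1 0 * (c * qh η₀ 2 0) = 0 := by
        linear_combination c * hr1 - (rhoT η₀ 1 0 / 2) * hca
      apply mul_left_cancel₀ (tauT_pos hη₀ 1).ne'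
      linear_combination h1 - hr1' - sigmaT η₀ 1 0 * ha1
    | succ n ih =>
      obtain ⟨ih1, ih2⟩ := ih
      refine ⟨ih2, ?_⟩
      have hr := rown hη₀ n
      have hn2 := hn (n+2) (by omega)
      have e1 : (n+2-1 : ℕ) = n+1 := rfl
      have e2 : (n+2+1 : ℕ) = n+3 := rfl
      rw [e1, e2] at hn2
      have e3 : (n+1+1 : ℕ) = n+2 := rfl
      have e4 : (n+1+2 : ℕ) = n+3 := rfl
      rw [e4]
      apply mul_left_cancel₀ (tauT_pos hη₀ (n+2)).ne'
      linear_combination hn2 - c * hr - rhoT η₀ (n+2) 0 * ih1 - sigmaT η₀ (n+2) 0 * ih2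
  intro n hn1
  match n, hn1 with
  | (m+1), _ => exact (key m).1
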